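/- In the snapshot regime over BSC(p) or BEC(ε), the transition probability of flipping coordinate i from 0 to 1 satisfies, as β→0: P_β^S(x, x^{(i,1)}) = 1/(2n) + (β/(4n))·κ·ΔΦ_i(x) + o(β), where κ=1−2p (BSC) or κ=1−ε (BEC) and ΔΦ_i(x)=Φ(1,x_{-i})−Φ(0,x_{-i}). -/

import Mathlib

open Finset Asymptotics

/-- Little-o expansion of the logistic function at 0. -/
lemma logistic_littleO (C : ℝ) :
    (fun β : ℝ => 1/(1+Real.exp (-(β * C))) - (1/2 + β * C / 4)) =o[nhds 0] (fun β : ℝ => β) := by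
  have h1 : HasDerivAt (fun t : ℝ => 1 + Real.exp (-(t * C))) (-C) 0 := by
    have h0 : HasDerivAt (fun t : ℝ => -(t * C)) (-C) 0 := by
      simpa using ((hasDerivAt_id (0:ℝ)).mul_const C).fun_neg
    simpa using (h0.exp).const_add 1
  have h2 : HasDerivAt (fun t : ℝ => (1 + Real.exp (-(t * C)))⁻¹) (C/4) 0 := by
    have hne : (1 + Real.exp (-((0:ℝ) * C))) ≠ 0 := by positivity
    have h := h1.fun_inv hne
    rw [show C/4 = - -C / (1 + Real.exp (-((0:ℝ) * C))) ^ 2 by norm_num [Real.exp_zero]]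
    exact h
  have h3 := hasDerivAt_iff_isLittleO.mp h2
  simp only [sub_zero, zero_mul, neg_zero, Real.exp_zero, smul_eq_mul] at h3
  refine h3.congr' (Filter.eventuallyEq_of_mem Filter.univ_mem fun β _ => ?_) (by rfl)
  norm_num
  ring

/-- High-temperature expansion of the snapshot kernel: the probability that a
uniformly chosen agent `i` (with `x_i = 0`) flips to `1` after a logit response
to one noisy observation per neighbor satisfies
`P_β^S(x, x^{(i,1)}) = 1/(2n) + (β/(4n))·κ·ΔΦ_i(x) + o(β)` as `β → 0`.
The channel is an abstract finite-alphabet memoryless channel with designated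
output symbols and attenuation `κ` (BSC: `κ = 1-2p`; BEC: `κ = 1-ε`). -/
theorem stmt8 {V : Type*} [Fintype V] [DecidableEq V] [Nonempty V]
    (G : SimpleGraph V) [DecidableRel G.Adj]
    (v : V → V → ℝ) (hsymm : ∀ i j, v i j = v j i) (hnn : ∀ i j, 0 ≤ v i j)
    {S : Type*} [Fintype S] [DecidableEq S] (one zero : S)
    (chan : Bool → S → ℝ) (κ : ℝ)
    (hchan_nn : ∀ a s, 0 ≤ chan a s)
    (hprob : ∀ a, ∑ s, chan a s = 1)
    (hmean : ∀ a : Bool,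
      ∑ s, chan a s * ((if s = one then (1:ℝ) else 0) - (if s = zero then (1:ℝ) else 0))
        = κ * ((if a = true then (1:ℝ) else 0) - (if a = false then (1:ℝ) else 0)))
    (Φ : (V → Bool) → ℝ)
    (hΦ : ∀ x, Φ x =
      (1/2) * ∑ a, ∑ b, if G.Adj a b ∧ x a = x b then v a b else 0)
    (x : V → Bool) (i : V) (hx : x i = false)
    (ΔΦ : ℝ) (hΔΦ : ΔΦ = Φ (Function.update x i true) - Φ (Function.update x i false)) :
    (fun β : ℝ =>
      (1 / (Fintype.card V : ℝ)) *
        (∑ y : V → S, (∏ j, chan (x j) (y j)) *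
          (1 / (1 + Real.exp (-(β * ∑ j ∈ G.neighborFinset i, v i j *
            ((if y j = one then (1:ℝ) else 0) - (if y j = zero then (1:ℝ) else 0)))))))
      - (1 / (2 * (Fintype.card V : ℝ)) + β / (4 * (Fintype.card V : ℝ)) * κ * ΔΦ))
      =o[nhds 0] (fun β => β) := by
  set n : ℝ := (Fintype.card V : ℝ) with hn
  set w : (V → S) → ℝ := fun y => ∏ j, chan (x j) (y j) with hw
  set c : (V → S) → ℝ := fun y => ∑ j ∈ G.neighborFinset i, v i j *
    ((if y j = one then (1:ℝ) else 0) - (if y j = zero then (1:ℝ) else 0)) with hc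
  -- (A) total mass one
  have hA : ∑ y : V → S, w y = 1 := by
    have := Fintype.prod_sum (fun (j : V) (s : S) => chan (x j) s)
    rw [hw, ← this]
    simp [hprob]
  -- marginal computation
  have hmarg : ∀ j : V, (∑ y : V → S, w y *
      ((if y j = one then (1:ℝ) else 0) - (if y j = zero then (1:ℝ) else 0)))
      = κ * ((if x j = true then (1:ℝ) else 0) - (if x j = false then (1:ℝ) else 0)) := by
    intro j
    set φ : S → ℝ := fun s => (if s = one then (1:ℝ) else 0) - (if s = zero then (1:ℝ) else 0) with hφ
    set F : V → S → ℝ := fun k s => if k = j then chan (x k) s * φ s else chan (x k) s with hF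
    have e1 : ∀ y : V → S, w y * φ (y j) = ∏ k, F k (y k) := by
      intro y
      show (∏ k, chan (x k) (y k)) * φ (y j) = ∏ k, F k (y k)
      rw [← Finset.mul_prod_erase univ (fun k => chan (x k) (y k)) (mem_univ j),
        ← Finset.mul_prod_erase univ (fun k => F k (y k)) (mem_univ j)]
      have : ∏ k ∈ univ.erase j, F k (y k) = ∏ k ∈ univ.erase j, chan (x k) (y k) := by
        refine Finset.prod_congr rfl fun k hk => ?_
        simp [hF, (Finset.mem_erase.mp hk).1]
      rw [this, hF]
      simp
      ring
    calc ∑ y : V → S, w y * φ (y j) = ∑ y : V → S, ∏ k, F k (y k) :=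
          Finset.sum_congr rfl fun y _ => e1 y
      _ = ∏ k, ∑ s, F k s := (Fintype.prod_sum _).symm
      _ = ∑ s, F j s := by
          refine Finset.prod_eq_single j (fun k _ hk => ?_) (by simp)
          simp only [hF, if_neg hk]
          exact hprob (x k)
      _ = κ * ((if x j = true then (1:ℝ) else 0) - (if x j = false then (1:ℝ) else 0)) := by
          simp only [hF, if_pos rfl]
          exact hmean (x j)
  -- (C) ΔΦ identity
  have hC : ΔΦ = ∑ j ∈ G.neighborFinset i, v i j *
      ((if x j = true then (1:ℝ) else 0) - (if x j = false then (1:ℝ) else 0)) := by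
    set E : V → ℝ := fun j => if G.Adj i j then
      v i j * ((if x j = true then (1:ℝ) else 0) - (if x j = false then (1:ℝ) else 0)) else 0 with hE
    have key : ∀ a b : V,
        (if G.Adj a b ∧ (Function.update x i true) a = (Function.update x i true) b then v a b else 0)
        - (if G.Adj a b ∧ (Function.update x i false) a = (Function.update x i false) b then v a b else 0)
        = (if a = i then E b else 0) + (if b = i then E a else 0) := by
      intro a b
      by_cases ha : a = i
      · by_cases hb : b = i
        · simp [ha, hb, hE]
        · rw [ha]
          simp only [if_pos rfl, if_neg hb, add_zero, hE]
          rw [Function.update_self, Function.update_self,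
            Function.update_of_ne hb, Function.update_of_ne hb]
          by_cases hadj : G.Adj i b
          · cases hxb : x b <;> simp [hadj, hxb]
          · simp [hadj]
      · by_cases hb : b = i
        · rw [hb]
          simp only [if_pos rfl, if_neg ha, zero_add, hE]
          rw [Function.update_self, Function.update_self,
            Function.update_of_ne ha, Function.update_of_ne ha]
          by_cases hadj : G.Adj a i
          · cases hxa : x a <;>
              simp [hadj, (G.adj_comm a i).mp hadj, hsymm a i, hxa]
          · have hadj' : ¬ G.Adj i a := fun h => hadj h.symm
            simp [hadj, hadj']
        · rw [Function.update_of_ne ha, Function.update_of_ne ha,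
            Function.update_of_ne hb, Function.update_of_ne hb]
          simp [ha, hb]
    have hsum : (∑ a, ∑ b, if G.Adj a b ∧ (Function.update x i true) a = (Function.update x i true) b then v a b else 0)
        - (∑ a, ∑ b, if G.Adj a b ∧ (Function.update x i false) a = (Function.update x i false) b then v a b else 0)
        = 2 * ∑ j, E j := by
      simp only [← Finset.sum_sub_distrib]
      have h1 : ∀ a : V, (∑ b, if a = i then E b else 0) = (if a = i then ∑ j, E j else 0) := by
        intro a; split <;> simp
      have h2 : ∀ a : V, (∑ b, if b = i then E a else 0) = E a :=
        fun a => by rw [Finset.sum_ite_eq' univ i (fun _ => E a)]; simp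
      calc (∑ a, ∑ b, ((if G.Adj a b ∧ (Function.update x i true) a = (Function.update x i true) b then v a b else 0)
            - (if G.Adj a b ∧ (Function.update x i false) a = (Function.update x i false) b then v a b else 0)))
          = ∑ a, ∑ b, ((if a = i then E b else 0) + (if b = i then E a else 0)) :=
            Finset.sum_congr rfl fun a _ => Finset.sum_congr rfl fun b _ => key a b
        _ = 2 * ∑ j, E j := by
            simp only [Finset.sum_add_distrib, h1, h2]
            rw [Finset.sum_ite_eq' univ i (fun _ => ∑ j, E j)]
            simp
            ring
    have hEn : (∑ j, E j) = ∑ j ∈ G.neighborFinset i, v i j *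
        ((if x j = true then (1:ℝ) else 0) - (if x j = false then (1:ℝ) else 0)) := by
      rw [SimpleGraph.neighborFinset_eq_filter, Finset.sum_filter]
    rw [hΔΦ, hΦ, hΦ, ← mul_sub, hsum, ← hEn]
    ring
  -- (B) mean of c
  have hB : ∑ y : V → S, w y * c y = κ * ΔΦ := by
    have e0 : ∑ y : V → S, w y * c y = ∑ y : V → S, ∑ j ∈ G.neighborFinset i,
        v i j * (w y * ((if y j = one then (1:ℝ) else 0) - (if y j = zero then (1:ℝ) else 0))) := by
      refine Finset.sum_congr rfl fun y _ => ?_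
      show w y * (∑ j ∈ G.neighborFinset i, v i j *
        ((if y j = one then (1:ℝ) else 0) - (if y j = zero then (1:ℝ) else 0))) = _
      rw [Finset.mul_sum]
      exact Finset.sum_congr rfl fun j _ => by ring
    rw [e0, Finset.sum_comm, hC, Finset.mul_sum]
    refine Finset.sum_congr rfl fun j _ => ?_
    rw [← Finset.mul_sum, hmarg j]
    ring
  -- pointwise rewriting of the target function
  have hfun : ∀ β : ℝ,
      (1 / n) * (∑ y : V → S, w y * (1 / (1 + Real.exp (-(β * c y)))))
        - (1 / (2 * n) + β / (4 * n) * κ * ΔΦ)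
      = (1 / n) * ∑ y : V → S, (w y * (1/(1+Real.exp (-(β * c y))) - (1/2 + β * c y / 4))) := by
    intro β
    have e : ∑ y : V → S, (w y * (1/(1+Real.exp (-(β * c y))) - (1/2 + β * c y / 4)))
        = (∑ y : V → S, w y * (1 / (1 + Real.exp (-(β * c y)))))
          - ((1/2) * ∑ y : V → S, w y) - (β/4) * ∑ y : V → S, w y * c y := by
      rw [Finset.mul_sum, Finset.mul_sum, ← Finset.sum_sub_distrib, ← Finset.sum_sub_distrib]
      refine Finset.sum_congr rfl fun y _ => by ring
    rw [e, hA, hB]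
    ring
  -- the little-o estimate
  have main : (fun β : ℝ => (1 / n) * ∑ y : V → S,
      (w y * (1/(1+Real.exp (-(β * c y))) - (1/2 + β * c y / 4)))) =o[nhds 0] (fun β : ℝ => β) := by
    refine IsLittleO.const_mul_left ?_ _
    exact IsLittleO.fun_sum fun y _ => (logistic_littleO (c y)).const_mul_left (w y)
  refine main.congr' (Filter.eventuallyEq_of_mem Filter.univ_mem fun β _ => ?_) (by rfl)
  exact (hfun β).symm
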